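/- If a strongly connected directed graph G on N vertices is balanced, i.e., (1/indeg(v))·Σ_{(u,v)∈E} 1/outdeg(u) = (1/outdeg(v))·Σ_{(v,w)∈E} 1/indeg(w) for every v, then the neutral fixation probability of a single mutant at vertex u equals (1/indeg(u)) / Σ_{v∈V} (1/indeg(v)), and in particular is at least 1/N². -/

import Mathlib

open Finset

/-- **Neutral fixation probabilities on balanced graphs.**
Let `G` be a strongly connected directed graph on `N ≥ 2` vertices that is
balanced, i.e. `(1/indeg(v))·Σ_{u → v} 1/outdeg(u) = (1/outdeg(v))·Σ_{v → w} 1/indeg(w)`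
for every `v`. Then the neutral (`r = 1`) single-mutant fixation probabilities
— the unique solution `x` of the system
`x_v·Σ_{u → v} 1/outdeg(u) = (1/outdeg(v))·Σ_{v → w} x_w` with `Σ_v x_v = 1` —
are given by `x_u = (1/indeg(u)) / Σ_v (1/indeg(v))`, and in particular
`x_u ≥ 1/N²` for every vertex `u`. -/
theorem balanced_graph_neutral_fixation
    {V : Type*} [Fintype V] [DecidableEq V]
    (Adj : V → V → Prop) [DecidableRel Adj]
    (hirr : ∀ v, ¬ Adj v v)
    (hconn : ∀ u v : V, u ≠ v → Relation.TransGen Adj u v)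
    (N : ℕ) (hN : N = Fintype.card V) (hN2 : 2 ≤ N)
    (indeg outdeg : V → ℕ)
    (hindeg : ∀ v, indeg v = (univ.filter (fun u => Adj u v)).card)
    (houtdeg : ∀ v, outdeg v = (univ.filter (fun w => Adj v w)).card)
    (hbal : ∀ v, (1 / (indeg v : ℝ)) * ∑ u ∈ univ.filter (fun u => Adj u v), 1 / (outdeg u : ℝ) =
      (1 / (outdeg v : ℝ)) * ∑ w ∈ univ.filter (fun w => Adj v w), 1 / (indeg w : ℝ))
    (x : V → ℝ)
    (hx : ∀ v, x v * (∑ u ∈ univ.filter (fun u => Adj u v), 1 / (outdeg u : ℝ)) =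
      (1 / (outdeg v : ℝ)) * ∑ w ∈ univ.filter (fun w => Adj v w), x w)
    (hxsum : ∑ v, x v = 1) :
    ∀ u, x u = (1 / (indeg u : ℝ)) / (∑ v, 1 / (indeg v : ℝ)) ∧ 1 / (N : ℝ) ^ 2 ≤ x u := by

  classical
  have hNpos : 0 < N := by omega
  have hcardV : 1 < Fintype.card V := by omega
  -- every vertex has an out-neighbor
  have hout : ∀ v : V, ∃ w, Adj v w := by
    intro v
    obtain ⟨u, hu⟩ := Fintype.exists_ne_of_one_lt_card hcardV v
    obtain ⟨b, hb, -⟩ := (Relation.TransGen.head'_iff).mp (hconn v u hu.symm)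
    exact ⟨b, hb⟩
  -- every vertex has an in-neighbor
  have hin : ∀ v : V, ∃ u, Adj u v := by
    intro v
    obtain ⟨u, hu⟩ := Fintype.exists_ne_of_one_lt_card hcardV v
    obtain ⟨b, -, hb⟩ := (Relation.TransGen.tail'_iff).mp (hconn u v hu)
    exact ⟨b, hb⟩
  have hindegpos : ∀ v : V, 0 < indeg v := by
    intro v
    rw [hindeg]
    obtain ⟨u, hu⟩ := hin v
    exact Finset.card_pos.mpr ⟨u, by simp [hu]⟩
  have houtdegpos : ∀ v : V, 0 < outdeg v := by
    intro v
    rw [houtdeg]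
    obtain ⟨w, hw⟩ := hout v
    exact Finset.card_pos.mpr ⟨w, by simp [hw]⟩
  have hiR : ∀ v : V, (0 : ℝ) < (indeg v : ℝ) := fun v => by exact_mod_cast hindegpos v
  have hoR : ∀ v : V, (0 : ℝ) < (outdeg v : ℝ) := fun v => by exact_mod_cast houtdegpos v
  set z : V → ℝ := fun v => x v * (indeg v : ℝ) with hz
  -- the key local equation
  have hkey : ∀ v, z v * (∑ w ∈ univ.filter (fun w => Adj v w), 1 / (indeg w : ℝ)) =
      ∑ w ∈ univ.filter (fun w => Adj v w), z w / (indeg w : ℝ) := by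
    intro v
    have hiv : (indeg v : ℝ) ≠ 0 := ne_of_gt (hiR v)
    have hov : (outdeg v : ℝ) ≠ 0 := ne_of_gt (hoR v)
    have h1 := hbal v
    have h2 := hx v
    have hio : (outdeg v : ℝ) * (∑ u ∈ univ.filter (fun u => Adj u v), 1 / (outdeg u : ℝ))
        = (indeg v : ℝ) * ∑ w ∈ univ.filter (fun w => Adj v w), 1 / (indeg w : ℝ) := by
      field_simp at h1
      linarith
    have hsumx : ∑ w ∈ univ.filter (fun w => Adj v w), x w
        = ∑ w ∈ univ.filter (fun w => Adj v w), z w / (indeg w : ℝ) := by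
      refine Finset.sum_congr rfl fun w _ => ?_
      have hiw : (indeg w : ℝ) ≠ 0 := ne_of_gt (hiR w)
      field_simp [hz]
      rfl
    calc z v * (∑ w ∈ univ.filter (fun w => Adj v w), 1 / (indeg w : ℝ))
        = x v * ((indeg v : ℝ) * ∑ w ∈ univ.filter (fun w => Adj v w), 1 / (indeg w : ℝ)) := by
          rw [hz]; ring
      _ = x v * ((outdeg v : ℝ) * (∑ u ∈ univ.filter (fun u => Adj u v), 1 / (outdeg u : ℝ))) := by
          rw [hio]
      _ = (outdeg v : ℝ) * (x v * (∑ u ∈ univ.filter (fun u => Adj u v), 1 / (outdeg u : ℝ))) := by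
          ring
      _ = (outdeg v : ℝ) * ((1 / (outdeg v : ℝ)) * ∑ w ∈ univ.filter (fun w => Adj v w), x w) := by
          rw [h2]
      _ = ∑ w ∈ univ.filter (fun w => Adj v w), x w := by
          field_simp
      _ = _ := hsumx
  -- maximum principle
  haveI : Nonempty V := Fintype.card_pos_iff.mp (by omega)
  have huniv : (univ : Finset V).Nonempty := univ_nonempty
  obtain ⟨v0, -, hv0⟩ := Finset.exists_max_image univ z huniv
  have step : ∀ v, z v = z v0 → ∀ w, Adj v w → z w = z v0 := by
    intro v hv w hw
    have hk := hkey v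
    rw [hv] at hk
    have h0 : ∑ u ∈ univ.filter (fun u => Adj v u), (z v0 - z u) / (indeg u : ℝ) = 0 := by
      simp only [sub_div]
      rw [Finset.sum_sub_distrib]
      have heq : ∀ u : V, z v0 / (indeg u : ℝ) = z v0 * (1 / (indeg u : ℝ)) := fun u => by ring
      simp only [heq]
      rw [← Finset.mul_sum]
      linarith [hk]
    have hnn : ∀ u ∈ univ.filter (fun u => Adj v u),
        0 ≤ (z v0 - z u) / (indeg u : ℝ) := by
      intro u _
      have h1 : 0 ≤ z v0 - z u := by linarith [hv0 u (mem_univ u)]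
      exact div_nonneg h1 (le_of_lt (hiR u))
    have hall := (Finset.sum_eq_zero_iff_of_nonneg hnn).mp h0
    have hwmem : w ∈ univ.filter (fun u => Adj v u) := by simp [hw]
    have hzero := hall w hwmem
    have hiw : (indeg w : ℝ) ≠ 0 := ne_of_gt (hiR w)
    have : z v0 - z w = 0 := by
      rcases div_eq_zero_iff.mp hzero with h | h
      · exact h
      · exact absurd h hiw
    linarith
  have prop : ∀ u, Relation.TransGen Adj v0 u → z u = z v0 := by
    intro u ht
    induction ht with
    | single h' => exact step v0 rfl _ h'
    | tail _ h2 ih => exact step _ ih _ h2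
  have hconst : ∀ u, z u = z v0 := by
    intro u
    by_cases h : u = v0
    · rw [h]
    · exact prop u (hconn v0 u (Ne.symm h))
  set S : ℝ := ∑ v, 1 / (indeg v : ℝ) with hS
  have hSpos : 0 < S := by
    rw [hS]
    exact Finset.sum_pos (fun v _ => one_div_pos.mpr (hiR v)) huniv
  have hxv : ∀ v, x v = z v0 * (1 / (indeg v : ℝ)) := by
    intro v
    have hiv : (indeg v : ℝ) ≠ 0 := ne_of_gt (hiR v)
    rw [← hconst v]
    simp only [hz]
    field_simp
  have hM : z v0 * S = 1 := by
    have hsx : ∑ v, x v = ∑ v, z v0 * (1 / (indeg v : ℝ)) :=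
      Finset.sum_congr rfl fun v _ => hxv v
    rw [hS, Finset.mul_sum, ← hsx, hxsum]
  have hMval : z v0 = 1 / S := by
    field_simp
    linarith [hM]
  intro u
  have hxu : x u = (1 / (indeg u : ℝ)) / S := by
    rw [hxv u, hMval]; ring
  refine ⟨hxu, ?_⟩
  rw [hxu]
  have hNR : (0 : ℝ) < (N : ℝ) := by exact_mod_cast hNpos
  have hiu : (indeg u : ℝ) ≤ (N : ℝ) := by
    have : indeg u ≤ N := by
      rw [hindeg, hN]
      exact le_trans (Finset.card_filter_le _ _) (le_of_eq (Finset.card_univ))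
    exact_mod_cast this
  have h1N : (1 : ℝ) / (N : ℝ) ≤ 1 / (indeg u : ℝ) :=
    one_div_le_one_div_of_le (hiR u) hiu
  have hSN : S ≤ (N : ℝ) := by
    rw [hS]
    calc ∑ v, 1 / (indeg v : ℝ) ≤ ∑ _v : V, (1 : ℝ) := by
          refine Finset.sum_le_sum fun v _ => ?_
          rw [div_le_one (hiR v)]
          exact_mod_cast hindegpos v
      _ = (Fintype.card V : ℝ) := by simp
      _ = (N : ℝ) := by rw [hN]
  calc 1 / (N : ℝ) ^ 2 = (1 / (N : ℝ)) / (N : ℝ) := by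
        field_simp
    _ ≤ (1 / (indeg u : ℝ)) / S := by
        exact div_le_div₀ (by positivity) h1N hSpos hSN
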